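/- Let h : ℝ^n → ℝ be differentiable, let W be a linear subspace of ℝ^n such that the gradient of h at every point of ℝ^n lies in W, and let Π denote the orthogonal projection of ℝ^n onto W. Let 𝒞 ⊆ ℝ^n be a convex set and κ ≥ 0 a real number such that ‖∇h(x)‖ ≤ κ for every x ∈ 𝒞. Then for all x₁, x₂ ∈ 𝒞, |h(x₁) - h(x₂)| ≤ κ·‖Π(x₁ - x₂)‖. -/

import Mathlib

open Set in
/-- Lemma 3 of the paper. If the gradient of `h` always lies in a subspace
`W` and is bounded by `κ` on a convex set `𝒞`, then `h` satisfies a Lipschitz-type bound along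
the orthogonal projection onto `W`. -/
theorem abs_sub_le_of_gradient_mem_subspace
    {n : ℕ} (h : EuclideanSpace ℝ (Fin n) → ℝ) (hdiff : Differentiable ℝ h)
    (W : Submodule ℝ (EuclideanSpace ℝ (Fin n)))
    (hgrad : ∀ x, gradient h x ∈ W)
    (C : Set (EuclideanSpace ℝ (Fin n))) (hC : Convex ℝ C)
    (κ : ℝ) (hκ : 0 ≤ κ)
    (hbound : ∀ x ∈ C, ‖gradient h x‖ ≤ κ) :
    ∀ x₁ ∈ C, ∀ x₂ ∈ C,
      |h x₁ - h x₂| ≤ κ * ‖(W.orthogonalProjectionOnto (x₁ - x₂) : EuclideanSpace ℝ (Fin n))‖ := by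
  intro x₁ h₁ x₂ h₂
  set v := x₁ - x₂ with hv
  set g : ℝ → ℝ := fun t => h (x₂ + t • v) with hg
  have hmem : ∀ t ∈ Icc (0:ℝ) 1, x₂ + t • v ∈ C := by
    intro t ht
    have := hC h₂ h₁ (a := 1 - t) (b := t) (by linarith [ht.2]) ht.1 (by ring)
    convert this using 1
    simp [v]
    module
  have hd : ∀ t ∈ Icc (0:ℝ) 1,
      HasDerivWithinAt g (inner (𝕜 := ℝ) (gradient h (x₂ + t • v)) v) (Icc (0:ℝ) 1) t := by
    intro t ht
    have h1 : HasDerivAt (fun t : ℝ => x₂ + t • v) v t := by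
      simpa using ((hasDerivAt_id t).smul_const v).const_add x₂
    have h2 : HasFDerivAt h
        ((InnerProductSpace.toDual ℝ _ (gradient h (x₂ + t • v))) :
          EuclideanSpace ℝ (Fin n) →L[ℝ] ℝ) (x₂ + t • v) := by
      have := (hdiff (x₂ + t • v)).hasGradientAt
      rwa [HasGradientAt] at this
    have := (h2.comp_hasDerivAt t h1)
    simpa [g, InnerProductSpace.toDual_apply_apply, Function.comp_def] using this.hasDerivWithinAt
  have hbd : ∀ t ∈ Ico (0:ℝ) 1,
      ‖inner (𝕜 := ℝ) (gradient h (x₂ + t • v)) v‖ ≤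
        κ * ‖(W.orthogonalProjectionOnto v : EuclideanSpace ℝ (Fin n))‖ := by
    intro t ht
    set w := gradient h (x₂ + t • v) with hw
    have hvproj : inner (𝕜 := ℝ) w v = inner (𝕜 := ℝ) w
        ((W.orthogonalProjectionOnto v : EuclideanSpace ℝ (Fin n))) := by
      have horth : v - (W.orthogonalProjectionOnto v : EuclideanSpace ℝ (Fin n)) ∈ Wᗮ :=
        Submodule.sub_starProjection_mem_orthogonal v
      have : inner (𝕜 := ℝ) w (v - (W.orthogonalProjectionOnto v : EuclideanSpace ℝ (Fin n))) = 0 :=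
        (Submodule.mem_orthogonal _ _).1 horth w (hgrad _) |>.symm ▸ by
          simpa [real_inner_comm] using (Submodule.mem_orthogonal _ _).1 horth w (hgrad _)
      rw [inner_sub_right] at this
      linarith
    rw [hvproj]
    calc ‖inner (𝕜 := ℝ) w ((W.orthogonalProjectionOnto v : EuclideanSpace ℝ (Fin n)))‖
        ≤ ‖w‖ * ‖(W.orthogonalProjectionOnto v : EuclideanSpace ℝ (Fin n))‖ := norm_inner_le_norm _ _
      _ ≤ κ * ‖(W.orthogonalProjectionOnto v : EuclideanSpace ℝ (Fin n))‖ := by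
          apply mul_le_mul_of_nonneg_right (hbound _ (hmem t ⟨ht.1, ht.2.le⟩)) (norm_nonneg _)
  have := norm_image_sub_le_of_norm_deriv_le_segment_01' hd hbd
  have hg1 : g 1 = h x₁ := by simp [g, v]
  have hg0 : g 0 = h x₂ := by simp [g]
  rw [hg1, hg0] at this
  simpa [Real.norm_eq_abs] using this
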